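/- Let 𝒳, 𝒴, 𝒵 be finite alphabets, 𝒜 a finite nonempty action set, g : 𝒳 × 𝒜 → ℝ a gain function, and let φ, ψ : ℝ → ℝ be strictly increasing continuous bijections such that the map p ↦ ψ(V_{φ,g}(p)) is convex on the probability simplex Δ_𝒳. Let p_{X,Y,Z} be a joint distribution forming a Markov chain X − Y − Z with strictly positive marginals p_Y and p_Z. Then the data-processing inequality holds: V̂_{ψ,φ,g}(X|Z) ≤ V̂_{ψ,φ,g}(X|Y); equivalently, the (ψ,φ,g)-posterior conditional entropy Ĥ_{ψ,φ,g} := −V̂_{ψ,φ,g} satisfies Ĥ_{ψ,φ,g}(X|Y) ≤ Ĥ_{ψ,φ,g}(X|Z). -/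

import Mathlib

/-- The generalized g-prior vulnerability of a distribution `p` on `𝒳`:
`V_{φ,g}(p) := max_{a∈𝒜} φ⁻¹(Σ_x p(x)·φ(g(x,a)))`, where `φinv` denotes the inverse
of `φ`. -/
noncomputable def Vprior {𝒳 𝒜 : Type*} [Fintype 𝒳] [Fintype 𝒜] [Nonempty 𝒜]
    (φ φinv : ℝ → ℝ) (g : 𝒳 → 𝒜 → ℝ) (p : 𝒳 → ℝ) : ℝ :=
  Finset.univ.sup' Finset.univ_nonempty fun a => φinv (∑ x, p x * φ (g x a))

/-- The generalized average g-posterior conditional vulnerability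
`V̂_{ψ,φ,g}(X|Y) = ψ⁻¹(Σ_y p_Y(y)·ψ(V_{φ,g}(p_{X|Y}(·|y))))` for a joint distribution `p`
on `𝒳 × 𝒴`, where `p_Y(y) = Σ_x p(x,y)` and `p_{X|Y}(x|y) = p(x,y)/p_Y(y)`. -/
noncomputable def Vhat {𝒳 𝒴 𝒜 : Type*} [Fintype 𝒳] [Fintype 𝒴] [Fintype 𝒜] [Nonempty 𝒜]
    (p : 𝒳 → 𝒴 → ℝ) (ψ ψinv φ φinv : ℝ → ℝ) (g : 𝒳 → 𝒜 → ℝ) : ℝ :=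
  ψinv (∑ y, (∑ x, p x y) *
    ψ (Vprior φ φinv g (fun x => p x y / ∑ x', p x' y)))

/-- If `φ, ψ` are strictly increasing continuous bijections such that
`p ↦ ψ(V_{φ,g}(p))` is convex on the simplex `Δ_𝒳`, and `p_{X,Y,Z}` forms a Markov chain
`X − Y − Z` with strictly positive marginals `p_Y`, `p_Z`, then the data-processing
inequality holds: `V̂_{ψ,φ,g}(X|Z) ≤ V̂_{ψ,φ,g}(X|Y)`, i.e.,
`Ĥ_{ψ,φ,g}(X|Y) ≤ Ĥ_{ψ,φ,g}(X|Z)`. -/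
theorem Vhat_DPI {𝒳 𝒴 𝒵 𝒜 : Type*} [Fintype 𝒳] [Fintype 𝒴] [Fintype 𝒵]
    [Fintype 𝒜] [Nonempty 𝒜]
    (g : 𝒳 → 𝒜 → ℝ) (φ ψ : ℝ → ℝ)
    (hφ : StrictMono φ) (hφc : Continuous φ) (hφb : Function.Bijective φ)
    (hψ : StrictMono ψ) (hψc : Continuous ψ) (hψb : Function.Bijective ψ)
    (hconv : ConvexOn ℝ (stdSimplex ℝ 𝒳)
      (fun q => ψ (Vprior φ (Function.invFun φ) g q)))
    (p : 𝒳 → 𝒴 → 𝒵 → ℝ) (hp0 : ∀ x y z, 0 ≤ p x y z)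
    (hp1 : ∑ x, ∑ y, ∑ z, p x y z = 1)
    (hpY : ∀ y, 0 < ∑ x, ∑ z, p x y z) (hpZ : ∀ z, 0 < ∑ x, ∑ y, p x y z)
    (hMarkov : ∀ x y z, p x y z * (∑ x', ∑ z', p x' y z') =
      (∑ z', p x y z') * (∑ x', p x' y z)) :
    Vhat (fun x z => ∑ y, p x y z) ψ (Function.invFun ψ) φ (Function.invFun φ) g ≤
      Vhat (fun x y => ∑ z, p x y z) ψ (Function.invFun ψ) φ (Function.invFun φ) g := by
  classical
  have hψinv_mono : Monotone (Function.invFun ψ) := by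
    intro a b hab
    by_contra h
    push_neg at h
    have h2 := hψ h
    rw [Function.invFun_eq (hψb.surjective a), Function.invFun_eq (hψb.surjective b)] at h2
    linarith
  set F : (𝒳 → ℝ) → ℝ := fun q => ψ (Vprior φ (Function.invFun φ) g q) with hF
  -- marginals
  have hYZsum : ∀ z : 𝒵, ∑ y, ∑ x, p x y z = ∑ x, ∑ y, p x y z := fun z => Finset.sum_comm
  have hXYsum : ∀ y : 𝒴, ∑ x, ∑ z, p x y z = ∑ z, ∑ x, p x y z := fun y => Finset.sum_comm
  have hpYne : ∀ y, (∑ x, ∑ z, p x y z) ≠ 0 := fun y => (hpY y).ne'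
  have hpZne : ∀ z, (∑ x, ∑ y, p x y z) ≠ 0 := fun z => (hpZ z).ne'
  -- conditional distributions given y are in the simplex
  have hqY : ∀ y : 𝒴, (fun x => (∑ z, p x y z) / ∑ x', ∑ z, p x' y z) ∈ stdSimplex ℝ 𝒳 := by
    intro y
    constructor
    · intro x
      exact div_nonneg (Finset.sum_nonneg fun z _ => hp0 x y z)
        (Finset.sum_nonneg fun x' _ => Finset.sum_nonneg fun z _ => hp0 x' y z)
    · rw [← Finset.sum_div]
      exact div_self (hpYne y)
  -- key pointwise Markov identity
  have hMark : ∀ x y z, (∑ z', p x y z') * (∑ x', p x' y z) / (∑ x, ∑ z, p x y z) = p x y z := by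
    intro x y z
    rw [← hMarkov x y z]
    exact mul_div_cancel_right₀ _ (hpYne y)
  -- Jensen per z
  have hJensen : ∀ z : 𝒵,
      F (fun x => (∑ y, p x y z) / ∑ x', ∑ y, p x' y z) ≤
      ∑ y, ((∑ x, p x y z) / (∑ x, ∑ y, p x y z)) *
        F (fun x => (∑ z', p x y z') / ∑ x', ∑ z', p x' y z') := by
    intro z
    have hw0 : ∀ y ∈ Finset.univ, 0 ≤ (∑ x, p x y z) / (∑ x, ∑ y, p x y z) := by
      intro y _
      exact div_nonneg (Finset.sum_nonneg fun x _ => hp0 x y z) (hpZ z).le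
    have hw1 : ∑ y, (∑ x, p x y z) / (∑ x, ∑ y, p x y z) = 1 := by
      rw [← Finset.sum_div, hYZsum z]
      exact div_self (hpZne z)
    have hcomb : (fun x => (∑ y, p x y z) / ∑ x', ∑ y, p x' y z) =
        ∑ y, ((∑ x, p x y z) / (∑ x, ∑ y, p x y z)) •
          (fun x => (∑ z', p x y z') / ∑ x', ∑ z', p x' y z') := by
      funext x
      rw [Finset.sum_apply]
      simp only [Pi.smul_apply, smul_eq_mul]
      have : ∀ y : 𝒴, ((∑ x, p x y z) / (∑ x, ∑ y, p x y z)) *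
          ((∑ z', p x y z') / ∑ x', ∑ z', p x' y z') =
          p x y z / (∑ x', ∑ y, p x' y z) := by
        intro y
        rw [← hMark x y z]
        field_simp
      rw [Finset.sum_congr rfl fun y _ => this y, ← Finset.sum_div]
    calc F (fun x => (∑ y, p x y z) / ∑ x', ∑ y, p x' y z)
        = F (∑ y, ((∑ x, p x y z) / (∑ x, ∑ y, p x y z)) •
            (fun x => (∑ z', p x y z') / ∑ x', ∑ z', p x' y z')) := by rw [hcomb]
      _ ≤ ∑ y, ((∑ x, p x y z) / (∑ x, ∑ y, p x y z)) •
            F (fun x => (∑ z', p x y z') / ∑ x', ∑ z', p x' y z') :=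
          hconv.map_sum_le hw0 hw1 (fun y _ => hqY y)
      _ = _ := by simp [smul_eq_mul]
  -- assemble
  unfold Vhat
  apply hψinv_mono
  have hstep : ∀ z : 𝒵, (∑ x, ∑ y, p x y z) *
      F (fun x => (∑ y, p x y z) / ∑ x', ∑ y, p x' y z) ≤
      ∑ y, (∑ x, p x y z) * F (fun x => (∑ z', p x y z') / ∑ x', ∑ z', p x' y z') := by
    intro z
    calc (∑ x, ∑ y, p x y z) * F (fun x => (∑ y, p x y z) / ∑ x', ∑ y, p x' y z)
        ≤ (∑ x, ∑ y, p x y z) * ∑ y, ((∑ x, p x y z) / (∑ x, ∑ y, p x y z)) *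
            F (fun x => (∑ z', p x y z') / ∑ x', ∑ z', p x' y z') :=
          mul_le_mul_of_nonneg_left (hJensen z) (hpZ z).le
      _ = _ := by
          rw [Finset.mul_sum]
          refine Finset.sum_congr rfl fun y _ => ?_
          rw [← mul_assoc, mul_comm (∑ x, ∑ y, p x y z), div_mul_cancel₀ _ (hpZne z)]
  calc ∑ z, (∑ x, ∑ y, p x y z) * ψ (Vprior φ (Function.invFun φ) g
          (fun x => (∑ y, p x y z) / ∑ x', ∑ y, p x' y z))
      ≤ ∑ z, ∑ y, (∑ x, p x y z) * F (fun x => (∑ z', p x y z') / ∑ x', ∑ z', p x' y z') :=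
        Finset.sum_le_sum fun z _ => hstep z
    _ = ∑ y, (∑ x, ∑ z, p x y z) * ψ (Vprior φ (Function.invFun φ) g
          (fun x => (∑ z, p x y z) / ∑ x', ∑ z, p x' y z)) := by
        rw [Finset.sum_comm]
        refine Finset.sum_congr rfl fun y _ => ?_
        rw [← Finset.sum_mul, ← hXYsum y]
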